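/- Let a, p ∈ [1/2, 1) and b ∈ (0, 1/2] with e^{ε₁} = a(1−b)/(b(1−a)) and p = e^{ε₂}/(e^{ε₂}+1) for ε₁, ε₂ ≥ 0. Then (2pa/b) / min{(1−a)/(1−b), 2(1−p)a/b} = max{2e^{ε₁}/(1 + e^{−ε₂}), e^{ε₂}} = e^{max{ε₂, ε₁ + ln(2/(1+e^{−ε₂}))}}. -/

import Mathlib

/-- The ratio `Ψ_upper / Ψ_lower` in the LDP analysis of PCKV-UE equals
`max {2e^{ε₁}/(1 + e^{−ε₂}), e^{ε₂}}`, which is the exponential of the total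
budget `max {ε₂, ε₁ + ln(2/(1+e^{−ε₂}))}`. -/
theorem pckv_ue_ratio_eq (a p b ε₁ ε₂ : ℝ)
    (ha : a ∈ Set.Ico (1/2 : ℝ) 1) (hp : p ∈ Set.Ico (1/2 : ℝ) 1)
    (hb : b ∈ Set.Ioc (0 : ℝ) (1/2))
    (hε₁ : 0 ≤ ε₁) (hε₂ : 0 ≤ ε₂)
    (he1 : Real.exp ε₁ = a * (1 - b) / (b * (1 - a)))
    (he2 : p = Real.exp ε₂ / (Real.exp ε₂ + 1)) :
    (2 * p * a / b) / min ((1 - a) / (1 - b)) (2 * (1 - p) * a / b)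
      = max (2 * Real.exp ε₁ / (1 + Real.exp (-ε₂))) (Real.exp ε₂) ∧
    max (2 * Real.exp ε₁ / (1 + Real.exp (-ε₂))) (Real.exp ε₂)
      = Real.exp (max ε₂ (ε₁ + Real.log (2 / (1 + Real.exp (-ε₂))))) := by
  obtain ⟨ha1, ha2⟩ := ha
  obtain ⟨hp1, hp2⟩ := hp
  obtain ⟨hb1, hb2⟩ := hb
  have ha0 : 0 < a := by linarith
  have hp0 : 0 < p := by linarith
  have h1a : 0 < 1 - a := by linarith
  have h1p : 0 < 1 - p := by linarith
  have h1b : 0 < 1 - b := by linarith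
  have hE : 0 < Real.exp ε₂ := Real.exp_pos _
  have hE1 : 0 < Real.exp ε₂ + 1 := by linarith
  have hEneg : Real.exp (-ε₂) = 1 / Real.exp ε₂ := by
    rw [Real.exp_neg]; exact (inv_eq_one_div _)
  have hD : 0 < 1 + Real.exp (-ε₂) := by positivity
  -- key identities
  have hA : (2 * p * a / b) / ((1 - a) / (1 - b))
      = 2 * Real.exp ε₁ / (1 + Real.exp (-ε₂)) := by
    rw [he1, hEneg, he2]
    field_simp
  have hB : (2 * p * a / b) / (2 * (1 - p) * a / b) = Real.exp ε₂ := by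
    have h1p' : 1 - p = 1 / (Real.exp ε₂ + 1) := by rw [he2]; field_simp; ring
    rw [h1p', he2]
    field_simp
  have hy : 0 < (1 - a) / (1 - b) := by positivity
  have hz : 0 < 2 * (1 - p) * a / b := by positivity
  have hX : 0 ≤ 2 * p * a / b := by positivity
  have hmain : (2 * p * a / b) / min ((1 - a) / (1 - b)) (2 * (1 - p) * a / b)
      = max (2 * Real.exp ε₁ / (1 + Real.exp (-ε₂))) (Real.exp ε₂) := by
    rcases le_total ((1 - a) / (1 - b)) (2 * (1 - p) * a / b) with h | h
    · rw [min_eq_left h, hA, max_eq_left]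
      rw [← hA, ← hB]
      exact div_le_div_of_nonneg_left hX hy h
    · rw [min_eq_right h, hB, max_eq_right]
      rw [← hA, ← hB]
      exact div_le_div_of_nonneg_left hX hz h
  refine ⟨hmain, ?_⟩
  have hAe : 2 * Real.exp ε₁ / (1 + Real.exp (-ε₂))
      = Real.exp (ε₁ + Real.log (2 / (1 + Real.exp (-ε₂)))) := by
    rw [Real.exp_add, Real.exp_log (by positivity)]
    ring
  rw [hAe, max_comm, ← Real.exp_monotone.map_max]
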